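/- Let 0 < θ < 1, let l ≥ 1 be an integer, and suppose x, y ≥ 0 are such that t·x + (1−t)·y ≥ 1/4 for all t ∈ [0,1]. Then every partial derivative of order l of the function g(x,y) = (x^θ − y^θ)/(x − y) (with g(x,x) = θ x^{θ−1}) at the point (x,y) is bounded in absolute value by 4^{l+1−θ} · θ·(1−θ)·(2−θ)···(l−θ). -/

import Mathlib

open Real Finset

/-- The divided difference of `t ↦ t^θ`, as a function on `ℝ × ℝ`, with the diagonal
value `θ * x^(θ-1)`. -/
noncomputable def divDiffRpow (θ : ℝ) (q : ℝ × ℝ) : ℝ :=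
  if q.1 = q.2 then θ * q.1 ^ (θ - 1) else (q.1 ^ θ - q.2 ^ θ) / (q.1 - q.2)

namespace DivDiffAux

open MeasureTheory Set

/-- The linear functional `p ↦ t p₁ + (1-t) p₂`. -/
noncomputable def Lmap (t : ℝ) : (ℝ × ℝ) →L[ℝ] ℝ :=
  t • ContinuousLinearMap.fst ℝ ℝ ℝ + (1 - t) • ContinuousLinearMap.snd ℝ ℝ ℝ

@[simp] theorem Lmap_apply (t : ℝ) (p : ℝ × ℝ) : Lmap t p = t * p.1 + (1 - t) * p.2 := by
  simp [Lmap]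

theorem Lmap_cont : Continuous fun t : ℝ => Lmap t := by
  exact (continuous_id.smul continuous_const).add
    ((continuous_const.sub continuous_id).smul continuous_const)

theorem Lmap_cont_apply (p : ℝ × ℝ) : Continuous fun t : ℝ => Lmap t p := by
  simp only [Lmap_apply]; fun_prop

theorem Lmap_norm_le {t : ℝ} (ht : t ∈ Set.Icc (0:ℝ) 1) : ‖Lmap t‖ ≤ 1 := by
  refine ContinuousLinearMap.opNorm_le_bound _ zero_le_one fun p => ?_
  rw [Lmap_apply, one_mul, Real.norm_eq_abs]
  have h1 : |p.1| ≤ ‖p‖ := norm_fst_le p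
  have h2 : |p.2| ≤ ‖p‖ := norm_snd_le p
  have ht0 := ht.1
  have ht1 := ht.2
  have habs := abs_add_le (t * p.1) ((1 - t) * p.2)
  rw [abs_mul, abs_mul, abs_of_nonneg ht0,
    abs_of_nonneg (by linarith : (0:ℝ) ≤ 1 - t)] at habs
  nlinarith [mul_le_mul_of_nonneg_left h1 ht0,
    mul_le_mul_of_nonneg_left h2 (by linarith : (0:ℝ) ≤ 1 - t), norm_nonneg p]

theorem le_Lmap {t : ℝ} (ht : t ∈ Set.Icc (0:ℝ) 1) (p : ℝ × ℝ) :
    min p.1 p.2 ≤ Lmap t p := by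
  rw [Lmap_apply]
  nlinarith [mul_nonneg ht.1 (sub_nonneg.2 (min_le_left p.1 p.2)),
    mul_nonneg (by linarith [ht.2] : (0:ℝ) ≤ 1 - t) (sub_nonneg.2 (min_le_right p.1 p.2))]

/-- The open set where both coordinates are positive. -/
def U : Set (ℝ × ℝ) := Set.Ioi 0 ×ˢ Set.Ioi 0

theorem mem_U {q : ℝ × ℝ} : q ∈ U ↔ 0 < q.1 ∧ 0 < q.2 := by
  simp [U, Set.mem_prod]

theorem U_open : IsOpen U := isOpen_Ioi.prod isOpen_Ioi

theorem Lmap_pos {q : ℝ × ℝ} (hq : q ∈ U) {t : ℝ} (ht : t ∈ Set.Icc (0:ℝ) 1) :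
    0 < Lmap t q :=
  lt_of_lt_of_le (lt_min (mem_U.1 hq).1 (mem_U.1 hq).2) (le_Lmap ht q)

/-- The parametric integral family. -/
noncomputable def Phi {E : Type*} [NormedAddCommGroup E] [NormedSpace ℝ E]
    (w : ℝ → ℝ) (c : ℝ) (A : ℝ → E) (p : ℝ × ℝ) : E :=
  ∫ t in (0:ℝ)..1, (w t * (Lmap t p) ^ c) • A t

theorem Phi_integrand_contOn {E : Type*} [NormedAddCommGroup E] [NormedSpace ℝ E]
    {w : ℝ → ℝ} (hw : Continuous w) (c : ℝ) {A : ℝ → E} (hA : Continuous A)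
    {p : ℝ × ℝ} (hp : p ∈ U) :
    ContinuousOn (fun t => (w t * (Lmap t p) ^ c) • A t) (Set.Icc (0:ℝ) 1) := by
  refine ContinuousOn.smul (ContinuousOn.mul hw.continuousOn ?_) hA.continuousOn
  exact ContinuousOn.rpow_const (Lmap_cont_apply p).continuousOn
    fun t ht => Or.inl (ne_of_gt (Lmap_pos hp ht))

theorem Phi_intable {E : Type*} [NormedAddCommGroup E] [NormedSpace ℝ E]
    {w : ℝ → ℝ} (hw : Continuous w) (c : ℝ) {A : ℝ → E} (hA : Continuous A)
    {p : ℝ × ℝ} (hp : p ∈ U) :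
    IntervalIntegrable (fun t => (w t * (Lmap t p) ^ c) • A t) volume 0 1 :=
  ContinuousOn.intervalIntegrable
    (by rw [Set.uIcc_of_le zero_le_one]; exact Phi_integrand_contOn hw c hA hp)

theorem smulRight_cont {E : Type*} [NormedAddCommGroup E] [NormedSpace ℝ E]
    {A : ℝ → E} (hA : Continuous A) :
    Continuous fun t => (Lmap t).smulRight (A t) := by
  have h : Continuous fun pr : ((ℝ × ℝ) →L[ℝ] ℝ) × E => pr.1.smulRight pr.2 :=
    (ContinuousLinearMap.smulRightL ℝ (ℝ × ℝ) E).continuous₂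
  exact h.comp (Lmap_cont.prodMk hA)

set_option synthInstance.maxHeartbeats 1000000 in
set_option maxHeartbeats 1000000 in
theorem Phi_hasFDerivAt {E : Type*} [NormedAddCommGroup E] [NormedSpace ℝ E] [CompleteSpace E]
    {w : ℝ → ℝ} (hw : Continuous w) (c : ℝ) {A : ℝ → E} (hA : Continuous A)
    {q : ℝ × ℝ} (hq : q ∈ U) :
    HasFDerivAt (Phi w c A)
      (Phi (fun t => c * w t) (c - 1) (fun t => (Lmap t).smulRight (A t)) q) q := by
  obtain ⟨hq1, hq2⟩ := mem_U.1 hq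
  set m : ℝ := min q.1 q.2 with hm
  have hm0 : 0 < m := lt_min hq1 hq2
  set ε : ℝ := m / 2 with hε'
  have hε : 0 < ε := by positivity
  have key : ∀ p ∈ Metric.ball q ε, ∀ t ∈ Set.Icc (0:ℝ) 1, m / 2 ≤ Lmap t p := by
    intro p hp t ht
    have hp' : dist p q < ε := Metric.mem_ball.1 hp
    have h1 : |p.1 - q.1| < ε := by
      refine lt_of_le_of_lt ?_ hp'
      rw [← Real.dist_eq]
      calc dist p.1 q.1 ≤ dist p.1 q.1 ⊔ dist p.2 q.2 := le_sup_left
        _ = dist p q := Prod.dist_eq.symm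
    have h2 : |p.2 - q.2| < ε := by
      refine lt_of_le_of_lt ?_ hp'
      rw [← Real.dist_eq]
      calc dist p.2 q.2 ≤ dist p.1 q.1 ⊔ dist p.2 q.2 := le_sup_right
        _ = dist p q := Prod.dist_eq.symm
    have hb1 := abs_lt.1 h1
    have hb2 := abs_lt.1 h2
    have hm1 : m ≤ q.1 := min_le_left _ _
    have hm2 : m ≤ q.2 := min_le_right _ _
    have hp1 : m / 2 ≤ p.1 := by simp only [hε'] at hb1; linarith [hb1.1]
    have hp2 : m / 2 ≤ p.2 := by simp only [hε'] at hb2; linarith [hb2.1]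
    calc m / 2 ≤ min p.1 p.2 := le_min hp1 hp2
      _ ≤ Lmap t p := le_Lmap ht p
  have hballU : Metric.ball q ε ⊆ U := by
    intro p hp
    refine mem_U.2 ⟨?_, ?_⟩
    · have := key p hp 1 ⟨zero_le_one, le_refl 1⟩
      simp only [Lmap_apply] at this; nlinarith
    · have := key p hp 0 ⟨le_refl 0, zero_le_one⟩
      simp only [Lmap_apply] at this; nlinarith
  have keyU : ∀ p ∈ Metric.ball q ε, ∀ t ∈ Set.Icc (0:ℝ) 1, Lmap t p ≤ ‖q‖ + ε := by
    intro p hp t ht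
    have hpn : ‖p‖ ≤ ‖q‖ + ε := by
      have h1 : ‖p‖ - ‖q‖ ≤ ‖p - q‖ := norm_sub_norm_le p q
      have h2 : ‖p - q‖ < ε := by rw [← dist_eq_norm]; exact Metric.mem_ball.1 hp
      linarith
    calc Lmap t p ≤ |Lmap t p| := le_abs_self _
      _ ≤ ‖Lmap t‖ * ‖p‖ := (Lmap t).le_opNorm p
      _ ≤ 1 * (‖q‖ + ε) :=
          mul_le_mul (Lmap_norm_le ht) hpn (norm_nonneg p) zero_le_one
      _ = ‖q‖ + ε := one_mul _
  set R : ℝ := ‖q‖ + ε with hR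
  have hR0 : 0 < R := by positivity
  set C1 : ℝ := max ((m/2) ^ (c-1)) (R ^ (c-1)) with hC1def
  have hC1pos : 0 < C1 := lt_max_of_lt_left (Real.rpow_pos_of_pos (by positivity) _)
  have hC1 : ∀ p ∈ Metric.ball q ε, ∀ t ∈ Set.Icc (0:ℝ) 1, (Lmap t p) ^ (c-1) ≤ C1 := by
    intro p hp t ht
    rcases le_or_gt 0 (c-1) with h | h
    · refine le_max_of_le_right (Real.rpow_le_rpow ?_ (keyU p hp t ht) h)
      exact le_trans (by positivity) (key p hp t ht)
    · exact le_max_of_le_left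
        (Real.rpow_le_rpow_of_nonpos (by positivity) (key p hp t ht) h.le)
  obtain ⟨Mw, hMw⟩ := (isCompact_Icc (a := (0:ℝ)) (b := 1)).exists_bound_of_continuousOn
    hw.continuousOn
  obtain ⟨MA, hMA⟩ := (isCompact_Icc (a := (0:ℝ)) (b := 1)).exists_bound_of_continuousOn
    hA.continuousOn
  have hMw0 : 0 ≤ Mw := le_trans (norm_nonneg _) (hMw 0 ⟨le_refl 0, zero_le_one⟩)
  have hMA0 : 0 ≤ MA := le_trans (norm_nonneg _) (hMA 0 ⟨le_refl 0, zero_le_one⟩)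
  have hIoc : Set.uIoc (0:ℝ) 1 ⊆ Set.Icc (0:ℝ) 1 := by
    rw [Set.uIoc_of_le zero_le_one]; exact Set.Ioc_subset_Icc_self
  simp only [Phi]
  refine intervalIntegral.hasFDerivAt_integral_of_dominated_of_fderiv_le
    (F := fun p t => (w t * (Lmap t p) ^ c) • A t)
    (F' := fun p t => ((c * w t) * (Lmap t p) ^ (c-1)) • ((Lmap t).smulRight (A t)))
    (bound := fun _ => (|c| * Mw * C1) * (1 * MA)) (Metric.ball_mem_nhds q hε) ?_ ?_ ?_ ?_ ?_ ?_
  · refine Filter.eventually_of_mem (Metric.ball_mem_nhds q hε) fun p hp => ?_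
    exact ((Phi_integrand_contOn hw c hA (hballU hp)).mono hIoc).aestronglyMeasurable
      measurableSet_uIoc
  · exact Phi_intable hw c hA hq
  · refine (ContinuousOn.mono ?_ hIoc).aestronglyMeasurable measurableSet_uIoc
    refine ContinuousOn.smul (ContinuousOn.mul (continuous_const.mul hw).continuousOn ?_)
      (smulRight_cont hA).continuousOn
    exact ContinuousOn.rpow_const (Lmap_cont_apply q).continuousOn
      fun t ht => Or.inl (ne_of_gt (Lmap_pos hq ht))
  · refine Filter.Eventually.of_forall fun t => fun ht p hp => ?_
    have ht' : t ∈ Set.Icc (0:ℝ) 1 := hIoc ht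
    refine le_trans (ContinuousLinearMap.opNorm_smul_le _ _) ?_
    have h1 : ‖(Lmap t).smulRight (A t)‖ ≤ 1 * MA := by
      rw [ContinuousLinearMap.norm_smulRight_apply]
      exact mul_le_mul (Lmap_norm_le ht') (hMA t ht') (norm_nonneg _) zero_le_one
    have h2 : ‖(c * w t) * (Lmap t p) ^ (c-1)‖ ≤ |c| * Mw * C1 := by
      rw [Real.norm_eq_abs, abs_mul, abs_mul]
      have hx0 : 0 < Lmap t p := lt_of_lt_of_le (by positivity) (key p hp t ht')
      rw [abs_of_pos (Real.rpow_pos_of_pos hx0 _)]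
      have := hMw t ht'
      rw [Real.norm_eq_abs] at this
      exact mul_le_mul (mul_le_mul le_rfl this (abs_nonneg _) (abs_nonneg _))
        (hC1 p hp t ht') (le_of_lt (Real.rpow_pos_of_pos hx0 _)) (by positivity)
    exact mul_le_mul h2 h1 (norm_nonneg _) (by positivity)
  · exact intervalIntegrable_const
  · refine Filter.Eventually.of_forall fun t => fun ht p hp => ?_
    have ht' : t ∈ Set.Icc (0:ℝ) 1 := hIoc ht
    have hx0 : 0 < Lmap t p := lt_of_lt_of_le (by positivity) (key p hp t ht')
    have h1 : HasFDerivAt (fun p => (Lmap t p) ^ c)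
        ((c * (Lmap t p) ^ (c-1)) • Lmap t) p :=
      (Real.hasDerivAt_rpow_const (p := c) (Or.inl hx0.ne')).comp_hasFDerivAt p
        (Lmap t).hasFDerivAt
    have h2 : HasFDerivAt (fun p => w t * (Lmap t p) ^ c)
        ((w t * (c * (Lmap t p) ^ (c-1))) • Lmap t) p := by
      have := h1.const_mul (w t)
      rwa [smul_smul] at this
    have h3 := h2.smul_const (A t)
    refine h3.congr_fderiv ?_
    refine ContinuousLinearMap.ext fun u => ?_
    simp only [ContinuousLinearMap.smul_apply, ContinuousLinearMap.smulRight_apply,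
      ContinuousLinearMap.coe_smul', Pi.smul_apply, smul_eq_mul, smul_smul]
    congr 1
    ring

theorem Phi_contDiffOn : ∀ (n : ℕ) {E : Type} [NormedAddCommGroup E] [NormedSpace ℝ E]
    [CompleteSpace E] {w : ℝ → ℝ} (_ : Continuous w) (c : ℝ) {A : ℝ → E} (_ : Continuous A),
    ContDiffOn ℝ n (Phi w c A) U
  | 0, E, _, _, _, w, hw, c, A, hA => by
      have h0 : ((0:ℕ) : WithTop ℕ∞) = 0 := rfl
      rw [h0, contDiffOn_zero]
      intro p hp
      exact ((Phi_hasFDerivAt hw c hA hp).differentiableAt.continuousAt).continuousWithinAt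
  | (n+1), E, _, _, _, w, hw, c, A, hA => by
      have hcast : ((n + 1 : ℕ) : WithTop ℕ∞) = (n : WithTop ℕ∞) + 1 := by
        push_cast; rfl
      rw [hcast]
      refine contDiffOn_succ_of_fderivWithin
        (fun p hp => (Phi_hasFDerivAt hw c hA hp).differentiableAt.differentiableWithinAt)
        (fun h => absurd h (by simp)) ?_
      have hA' : Continuous fun t => (Lmap t).smulRight (A t) := smulRight_cont hA
      have IH : ContDiffOn ℝ n
          (Phi (fun t => c * w t) (c-1)
            (fun t => (Lmap t).smulRight (A t) : ℝ → (ℝ × ℝ) →L[ℝ] E)) U :=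
        Phi_contDiffOn n (continuous_const.mul hw) (c-1) hA'
      refine IH.congr fun p hp => ?_
      rw [fderivWithin_of_isOpen U_open hp]
      exact (Phi_hasFDerivAt hw c hA hp).fderiv

theorem Phi_iter : ∀ (l : ℕ) (w : ℝ → ℝ), Continuous w → ∀ (c : ℝ) (A : ℝ → ℝ),
    Continuous A → ∀ (q : ℝ × ℝ), q ∈ U → ∀ (v : Fin l → ℝ × ℝ),
    iteratedFDerivWithin ℝ l (Phi w c A) U q v
      = ∫ t in (0:ℝ)..1, (∏ i, Lmap t (v i)) *
          ((∏ j ∈ Finset.range l, (c - (j:ℝ))) * (w t * (Lmap t q) ^ (c - (l:ℝ)) * A t))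
  | 0, w, hw, c, A, hA, q, hq, v => by
      simp [Phi, smul_eq_mul]
  | (l+1), w, hw, c, A, hA, q, hq, v => by
      have hU : UniqueDiffOn ℝ U := U_open.uniqueDiffOn
      have hw' : Continuous fun t => c * w t := continuous_const.mul hw
      have hA' : Continuous fun t => (Lmap t).smulRight (A t) := smulRight_cont hA
      have hEqFd : Set.EqOn (fderivWithin ℝ (Phi w c A) U)
          (Phi (fun t => c * w t) (c-1) (fun t => (Lmap t).smulRight (A t))) U := by
        intro p hp
        rw [fderivWithin_of_isOpen U_open hp]
        exact (Phi_hasFDerivAt hw c hA hp).fderiv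
      have hCD : ContDiffOn ℝ l (fderivWithin ℝ (Phi w c A) U) U :=
        (Phi_contDiffOn l hw' (c-1) hA').congr hEqFd
      have step1 : iteratedFDerivWithin ℝ (l+1) (Phi w c A) U q v
          = iteratedFDerivWithin ℝ l
              (fun p => fderivWithin ℝ (Phi w c A) U p (v (Fin.last l))) U q (Fin.init v) := by
        rw [iteratedFDerivWithin_succ_apply_right hU hq]
        have h := (ContinuousLinearMap.apply ℝ ℝ (v (Fin.last l))).iteratedFDerivWithin_comp_left
          (f := fderivWithin ℝ (Phi w c A) U) (hCD q hq) hU hq le_rfl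
        have h2 := congrArg
          (fun M : ContinuousMultilinearMap ℝ (fun _ : Fin l => ℝ × ℝ) ℝ => M (Fin.init v)) h
        simp only [ContinuousLinearMap.compContinuousMultilinearMap_coe, Function.comp_def,
          ContinuousLinearMap.apply_apply] at h2
        exact h2.symm
      rw [step1]
      have hEq2 : Set.EqOn
          (fun p => fderivWithin ℝ (Phi w c A) U p (v (Fin.last l)))
          (Phi (fun t => c * w t * Lmap t (v (Fin.last l))) (c-1) A) U := by
        intro p hp
        show (fderivWithin ℝ (Phi w c A) U p) (v (Fin.last l)) = _
        rw [hEqFd hp]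
        show (Phi (fun t => c * w t) (c-1) (fun t => (Lmap t).smulRight (A t)) p)
            (v (Fin.last l)) = _
        rw [Phi, Phi, ContinuousLinearMap.intervalIntegral_apply (Phi_intable hw' (c-1) hA' hp)]
        refine intervalIntegral.integral_congr fun t _ => ?_
        simp only [ContinuousLinearMap.smul_apply, ContinuousLinearMap.smulRight_apply,
          smul_eq_mul]
        ring
      rw [iteratedFDerivWithin_congr hEq2 hq l]
      rw [Phi_iter l (fun t => c * w t * Lmap t (v (Fin.last l))) ((hw'.mul (Lmap_cont_apply (v (Fin.last l))))) (c-1) A hA q hq (Fin.init v)]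
      refine intervalIntegral.integral_congr fun t _ => ?_
      rw [Fin.prod_univ_castSucc (f := fun i => Lmap t (v i)),
        Finset.prod_range_succ' (fun j => c - (j:ℝ)) l]
      have hprod : (∏ j ∈ Finset.range l, (c - 1 - (j:ℝ)))
          = ∏ j ∈ Finset.range l, (c - ((j:ℕ)+1:ℕ)) := by
        refine Finset.prod_congr rfl fun j _ => ?_
        push_cast; ring
      have hexp : c - 1 - (l:ℝ) = c - ((l:ℕ)+1:ℕ) := by push_cast; ring
      simp only [Fin.init]
      rw [hexp, hprod]
      push_cast
      ring

theorem abs_prod_shift (θ : ℝ) (hθ1 : θ < 1) :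
    ∀ l : ℕ, (∏ j ∈ Finset.range l, |θ - 1 - (j:ℝ)|)
      = ∏ j ∈ Finset.Icc 1 l, ((j:ℝ) - θ)
  | 0 => by simp
  | (l+1) => by
      rw [Finset.prod_range_succ, Finset.prod_Icc_succ_top (Nat.le_add_left 1 l),
        abs_prod_shift θ hθ1 l]
      congr 1
      rw [abs_of_nonpos (by linarith [Nat.cast_nonneg (α := ℝ) l] : θ - 1 - (l:ℝ) ≤ 0)]
      push_cast
      ring

theorem divDiff_eq_Phi {θ : ℝ} (hθ0 : 0 < θ) (hθ1 : θ < 1) :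
    Set.EqOn (divDiffRpow θ) (Phi (fun _ => θ) (θ - 1) (fun _ => (1:ℝ))) U := by
  rintro ⟨a, b⟩ hq
  obtain ⟨ha, hb⟩ := mem_U.1 hq
  simp only [Phi, smul_eq_mul, mul_one, Lmap_apply, divDiffRpow]
  by_cases hab : a = b
  · subst hab
    rw [if_pos rfl]
    rw [show (fun t : ℝ => θ * (t * (a,a).1 + (1-t) * (a,a).2) ^ (θ-1))
        = fun _ : ℝ => θ * a ^ (θ-1) from funext fun t => by
          simp only; rw [show t * (a,a).1 + (1-t) * (a,a).2 = a by simp; ring]]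
    simp
  · rw [if_neg hab]
    have h1 : Set.EqOn (fun t : ℝ => θ * (t * a + (1-t) * b) ^ (θ-1))
        (fun t : ℝ => (fun u : ℝ => θ * u ^ (θ-1)) ((a - b) * t + b)) (Set.uIcc 0 1) := by
      intro t _
      simp only
      rw [show (a - b) * t + b = t * a + (1-t) * b by ring]
    rw [intervalIntegral.integral_congr h1,
      intervalIntegral.integral_comp_mul_add (fun u : ℝ => θ * u ^ (θ-1))
        (sub_ne_zero.2 hab) b]
    rw [show (a - b) * 0 + b = b by ring, show (a - b) * 1 + b = a by ring]
    rw [intervalIntegral.integral_const_mul, integral_rpow (Or.inl (by linarith))]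
    rw [show θ - 1 + 1 = θ by ring]
    rw [smul_eq_mul]
    field_simp

end DivDiffAux

open DivDiffAux MeasureTheory in
theorem divided_difference_derivative_bounds
    (θ : ℝ) (hθ0 : 0 < θ) (hθ1 : θ < 1) (l : ℕ) (hl : 1 ≤ l)
    (x y : ℝ) (hx : 0 ≤ x) (hy : 0 ≤ y)
    (hfar : ∀ t ∈ Set.Icc (0:ℝ) 1, (1:ℝ)/4 ≤ t * x + (1 - t) * y)
    (v : Fin l → ℝ × ℝ) (hv : ∀ i, v i = ((1:ℝ), (0:ℝ)) ∨ v i = ((0:ℝ), (1:ℝ))) :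
    ‖iteratedFDeriv ℝ l (divDiffRpow θ) (x, y) v‖ ≤
      (4:ℝ) ^ ((l : ℝ) + 1 - θ) * (θ * ∏ j ∈ Finset.Icc 1 l, ((j : ℝ) - θ)) := by
  have hx4 : (1:ℝ)/4 ≤ x := by
    have := hfar 1 (by norm_num)
    simpa using this
  have hy4 : (1:ℝ)/4 ≤ y := by
    have := hfar 0 (by norm_num)
    simpa using this
  have hq : ((x, y) : ℝ × ℝ) ∈ U := mem_U.2 ⟨by simp; linarith, by simp; linarith⟩
  rw [← iteratedFDerivWithin_of_isOpen l U_open hq]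
  rw [iteratedFDerivWithin_congr (divDiff_eq_Phi hθ0 hθ1) hq]
  rw [Phi_iter l (fun _ => θ) continuous_const (θ - 1) (fun _ => (1:ℝ))
    continuous_const (x, y) hq v]
  set C : ℝ := (4:ℝ) ^ ((l : ℝ) + 1 - θ) * (θ * ∏ j ∈ Finset.Icc 1 l, ((j : ℝ) - θ)) with hC
  have hbound : ∀ t ∈ Set.uIoc (0:ℝ) 1,
      ‖(∏ i, Lmap t (v i)) * ((∏ j ∈ Finset.range l, (θ - 1 - (j:ℝ)))
        * (θ * (Lmap t (x, y)) ^ (θ - 1 - (l:ℝ)) * 1))‖ ≤ C := by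
    intro t ht
    rw [Set.uIoc_of_le zero_le_one] at ht
    have ht0 : 0 < t := ht.1
    have ht1 : t ≤ 1 := ht.2
    have hP1 : |∏ i, Lmap t (v i)| ≤ 1 := by
      rw [Finset.abs_prod]
      refine Finset.prod_le_one (fun i _ => abs_nonneg _) fun i _ => ?_
      have hi : Lmap t (v i) = t ∨ Lmap t (v i) = 1 - t := by
        rcases hv i with h | h
        · left; rw [h, Lmap_apply]; norm_num
        · right; rw [h, Lmap_apply]; norm_num
      rcases hi with h | h <;> rw [h, abs_le] <;> constructor <;> linarith
    have hP2 : |∏ j ∈ Finset.range l, (θ - 1 - (j:ℝ))|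
        = ∏ j ∈ Finset.Icc 1 l, ((j:ℝ) - θ) := by
      rw [Finset.abs_prod]
      exact abs_prod_shift θ hθ1 l
    have hLpos : 0 < Lmap t (x, y) := Lmap_pos hq ⟨ht0.le, ht1⟩
    have h14 : (1:ℝ)/4 ≤ Lmap t (x, y) := by
      refine le_trans ?_ (le_Lmap ⟨ht0.le, ht1⟩ (x, y))
      simp only
      exact le_min hx4 hy4
    have hZ : (Lmap t (x, y)) ^ (θ - 1 - (l:ℝ)) ≤ (4:ℝ) ^ ((l:ℝ) + 1 - θ) := by
      have h1 := Real.rpow_le_rpow_of_nonpos (by norm_num : (0:ℝ) < 1/4) h14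
        (by linarith [Nat.cast_nonneg (α := ℝ) l] : θ - 1 - (l:ℝ) ≤ 0)
      have h2 : ((1:ℝ)/4) ^ (θ - 1 - (l:ℝ)) = (4:ℝ) ^ ((l:ℝ) + 1 - θ) := by
        rw [one_div, Real.inv_rpow (by norm_num : (0:ℝ) ≤ 4),
          show (l:ℝ) + 1 - θ = -(θ - 1 - (l:ℝ)) by ring,
          Real.rpow_neg (by norm_num : (0:ℝ) ≤ 4)]
      rw [← h2]
      exact h1
    have hZpos : 0 < (Lmap t (x, y)) ^ (θ - 1 - (l:ℝ)) := Real.rpow_pos_of_pos hLpos _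
    have hIccpos : (0:ℝ) ≤ ∏ j ∈ Finset.Icc 1 l, ((j:ℝ) - θ) := by
      rw [← hP2]; exact abs_nonneg _
    rw [Real.norm_eq_abs, abs_mul, abs_mul, mul_one, abs_mul, abs_of_pos hθ0,
      abs_of_pos hZpos, hP2]
    calc |∏ i, Lmap t (v i)| * ((∏ j ∈ Finset.Icc 1 l, ((j:ℝ) - θ))
          * (θ * (Lmap t (x, y)) ^ (θ - 1 - (l:ℝ))))
        ≤ 1 * ((∏ j ∈ Finset.Icc 1 l, ((j:ℝ) - θ)) * (θ * ((4:ℝ) ^ ((l:ℝ) + 1 - θ)))) := by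
          gcongr
      _ = C := by rw [hC]; ring
  have := intervalIntegral.norm_integral_le_of_norm_le_const hbound
  simpa using this
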